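/- arXiv:1404.4236 — 3 statements merged into one kernel-verified Lean document; each statement's English description precedes it below -/
import Mathlib

section
/- Let f : ℝ → ℝ be continuous and satisfy the exponential decay estimates with constants C₁, C₂, α, β > 0. Then the Fourier transform F(f) is holomorphic (complex differentiable) on the open strip S = {ω ∈ ℂ : −α < Im ω < β}. -/
open MeasureTheory Real Set

lemma integrable_exp_neg_abs' {c : ℝ} (hc : 0 < c) :
    Integrable (fun t : ℝ => Real.exp (-c * |t|)) := by
  have hIoi : IntegrableOn (fun t : ℝ => Real.exp (-c * |t|)) (Ioi 0) :=
    (exp_neg_integrableOn_Ioi 0 hc).congr_fun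
      (fun x hx => by rw [abs_of_pos hx]) measurableSet_Ioi
  have hIic : IntegrableOn (fun t : ℝ => Real.exp (-c * |t|)) (Iic 0) := by
    rw [← Measure.map_neg_eq_self (volume : Measure ℝ)]
    have m : MeasurableEmbedding fun x : ℝ => -x :=
      (Homeomorph.neg ℝ).measurableEmbedding
    rw [m.integrableOn_map_iff]
    simp_rw [Function.comp_def, abs_neg, neg_preimage, neg_Iic, neg_zero]
    exact Iff.mpr integrableOn_Ici_iff_integrableOn_Ioi hIoi
  have := hIic.union hIoi
  rwa [Iic_union_Ioi, integrableOn_univ] at this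

theorem fourier_bicomplex_holomorphic_on_strip
    (f : ℝ → ℝ) (C₁ C₂ α β : ℝ)
    (hC₁ : 0 < C₁) (hC₂ : 0 < C₂) (hα : 0 < α) (hβ : 0 < β)
    (hf : Continuous f)
    (h₁ : ∀ t : ℝ, 0 ≤ t → |f t| ≤ C₁ * Real.exp (-α * t))
    (h₂ : ∀ t : ℝ, t ≤ 0 → |f t| ≤ C₂ * Real.exp (β * t)) :
    DifferentiableOn ℂ
      (fun ω : ℂ => ∫ t : ℝ, Complex.exp (Complex.I * ω * t) * (f t : ℂ))
      {ω : ℂ | -α < ω.im ∧ ω.im < β} := by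
  intro ω₀ hω₀
  obtain ⟨hω₀₁, hω₀₂⟩ := hω₀
  set ε : ℝ := min (ω₀.im + α) (β - ω₀.im) / 2 with hεdef
  have hε : 0 < ε := by
    apply div_pos _ (by norm_num)
    exact lt_min (by linarith) (by linarith)
  have hε1 : 2 * ε ≤ ω₀.im + α := by
    have := min_le_left (ω₀.im + α) (β - ω₀.im); rw [hεdef]; linarith
  have hε2 : 2 * ε ≤ β - ω₀.im := by
    have := min_le_right (ω₀.im + α) (β - ω₀.im); rw [hεdef]; linarith
  -- norm of the exponential
  have hnorm : ∀ (ω : ℂ) (t : ℝ),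
      ‖Complex.exp (Complex.I * ω * t)‖ = Real.exp (-ω.im * t) := by
    intro ω t
    rw [Complex.norm_exp]
    congr 1
    simp [Complex.mul_re, Complex.mul_im]
  -- key pointwise bound on the ball
  have key : ∀ ω : ℂ, -α + ε ≤ ω.im → ω.im ≤ β - ε → ∀ t : ℝ,
      Real.exp (-ω.im * t) * |f t| ≤ (C₁ + C₂) * Real.exp (-ε * |t|) := by
    intro ω him1 him2 t
    rcases le_total 0 t with ht | ht
    · rw [abs_of_nonneg ht]
      calc Real.exp (-ω.im * t) * |f t|
          ≤ Real.exp (-ω.im * t) * (C₁ * Real.exp (-α * t)) := by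
            exact mul_le_mul_of_nonneg_left (h₁ t ht) (Real.exp_pos _).le
        _ = C₁ * Real.exp (-ω.im * t + -α * t) := by
            rw [Real.exp_add]; ring
        _ ≤ C₁ * Real.exp (-ε * t) := by
            gcongr
            nlinarith
        _ ≤ (C₁ + C₂) * Real.exp (-ε * t) := by
            gcongr; linarith
    · rw [abs_of_nonpos ht]
      calc Real.exp (-ω.im * t) * |f t|
          ≤ Real.exp (-ω.im * t) * (C₂ * Real.exp (β * t)) := by
            exact mul_le_mul_of_nonneg_left (h₂ t ht) (Real.exp_pos _).le
        _ = C₂ * Real.exp (-ω.im * t + β * t) := by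
            rw [Real.exp_add]; ring
        _ ≤ C₂ * Real.exp (-ε * -t) := by
            gcongr
            nlinarith
        _ ≤ (C₁ + C₂) * Real.exp (-ε * -t) := by
            gcongr; linarith
  have himball : ∀ ω ∈ Metric.ball ω₀ ε, -α + ε ≤ ω.im ∧ ω.im ≤ β - ε := by
    intro ω hω
    have h1 : |(ω - ω₀).im| ≤ ‖ω - ω₀‖ := Complex.abs_im_le_norm _
    have h2 : ‖ω - ω₀‖ < ε := by rwa [Metric.mem_ball, Complex.dist_eq] at hω
    have h3 : |ω.im - ω₀.im| < ε := by
      rw [Complex.sub_im] at h1; linarith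
    rw [abs_lt] at h3
    constructor <;> linarith [h3.1, h3.2]
  -- derivative in ω
  have hderiv : ∀ (ω : ℂ) (t : ℝ),
      HasDerivAt (fun ω : ℂ => Complex.exp (Complex.I * ω * t) * (f t : ℂ))
        ((Complex.exp (Complex.I * ω * t) * (Complex.I * t)) * (f t : ℂ)) ω := by
    intro ω t
    have h0 : HasDerivAt (fun ω : ℂ => Complex.I * ω * (t : ℂ)) (Complex.I * t) ω := by
      simpa using (((hasDerivAt_id ω).const_mul Complex.I).mul_const (t : ℂ))
    exact (h0.cexp).mul_const _
  -- measurability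
  have hcont0 : ∀ ω : ℂ, Continuous (fun t : ℝ => Complex.exp (Complex.I * ω * t)) := by
    intro ω
    exact Complex.continuous_exp.comp (continuous_const.mul Complex.continuous_ofReal)
  have hcontf : Continuous (fun t : ℝ => (f t : ℂ)) := Complex.continuous_ofReal.comp hf
  have hmeas : ∀ ω : ℂ, AEStronglyMeasurable
      (fun t : ℝ => Complex.exp (Complex.I * ω * t) * (f t : ℂ)) volume := by
    intro ω
    exact ((hcont0 ω).mul hcontf).aestronglyMeasurable
  -- integrability of F ω₀
  have hint : Integrable (fun t : ℝ => Complex.exp (Complex.I * ω₀ * t) * (f t : ℂ)) := by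
    apply Integrable.mono' ((integrable_exp_neg_abs' hε).const_mul (C₁ + C₂)) (hmeas ω₀)
    filter_upwards with t
    rw [norm_mul, hnorm, Complex.norm_real, Real.norm_eq_abs]
    exact key ω₀ (by linarith) (by linarith) t
  -- the dominating bound for the derivative
  have habs : ∀ t : ℝ, |t| ≤ 2 / ε * Real.exp (ε / 2 * |t|) := by
    intro t
    have h := Real.add_one_le_exp (ε / 2 * |t|)
    have h2 : ε / 2 * |t| ≤ Real.exp (ε / 2 * |t|) := by linarith
    calc |t| = 2 / ε * (ε / 2 * |t|) := by field_simp
      _ ≤ 2 / ε * Real.exp (ε / 2 * |t|) := by gcongr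
  have main := hasDerivAt_integral_of_dominated_loc_of_deriv_le (μ := volume)
      (F := fun (ω : ℂ) (t : ℝ) => Complex.exp (Complex.I * ω * t) * (f t : ℂ))
      (F' := fun (ω : ℂ) (t : ℝ) =>
        (Complex.exp (Complex.I * ω * t) * (Complex.I * t)) * (f t : ℂ))
      (x₀ := ω₀)
      (bound := fun t : ℝ => (C₁ + C₂) * (2 / ε) * Real.exp (-(ε / 2) * |t|))
      (Metric.ball_mem_nhds ω₀ hε) (Filter.Eventually.of_forall hmeas) hint
      ((((hcont0 ω₀).mul (continuous_const.mul Complex.continuous_ofReal)).mul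
        hcontf).aestronglyMeasurable)
      ?_ ?_ ?_
  · exact main.2.differentiableAt.differentiableWithinAt
  · -- bound
    filter_upwards with t ω hω
    obtain ⟨him1, him2⟩ := himball ω hω
    simp only [norm_mul, hnorm, Complex.norm_I, one_mul, Complex.norm_real, Real.norm_eq_abs]
    calc Real.exp (-ω.im * t) * |t| * |f t|
        = |t| * (Real.exp (-ω.im * t) * |f t|) := by ring
      _ ≤ (2 / ε * Real.exp (ε / 2 * |t|)) * ((C₁ + C₂) * Real.exp (-ε * |t|)) := by
          apply mul_le_mul (habs t) (key ω him1 him2 t) (by positivity) (by positivity)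
      _ = (C₁ + C₂) * (2 / ε) * Real.exp (-(ε / 2) * |t|) := by
          rw [mul_mul_mul_comm, ← Real.exp_add]
          ring_nf
  · exact ((integrable_exp_neg_abs' (by positivity : (0:ℝ) < ε / 2)).const_mul
      ((C₁ + C₂) * (2 / ε))).congr (by filter_upwards with t; ring_nf)
  · filter_upwards with t ω _
    exact hderiv ω t
end

section
/- Let f, g : ℝ → ℝ be continuous functions each satisfying the exponential decay estimates with constants C₁, C₂, α, β > 0. If F(f)(ω) = F(g)(ω) for all ω ∈ ℂ in the strip S = {ω ∈ ℂ : −α < Im ω < β}, then f(t) = g(t) for all t ∈ ℝ. -/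
open MeasureTheory Real FourierTransform

lemma integrable_exp_neg_mul_abs' {γ : ℝ} (hγ : 0 < γ) :
    Integrable (fun x : ℝ => Real.exp (-γ * |x|)) := by
  have hIoi : IntegrableOn (fun x : ℝ => Real.exp (-γ * |x|)) (Set.Ioi 0) :=
    (exp_neg_integrableOn_Ioi 0 hγ).congr_fun
      (fun x hx => by rw [abs_of_pos hx]) measurableSet_Ioi
  rw [← integrableOn_univ, ← @Set.Iio_union_Ici _ _ (0 : ℝ), integrableOn_union,
    integrableOn_Ici_iff_integrableOn_Ioi]
  refine ⟨?_, hIoi⟩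
  rw [← (Measure.measurePreserving_neg (volume : Measure ℝ)).integrableOn_comp_preimage
      (Homeomorph.neg ℝ).measurableEmbedding]
  simp only [Function.comp_def, abs_neg, Set.neg_preimage, Set.neg_Iio, neg_zero]
  exact hIoi

lemma integrable_of_decay {f : ℝ → ℝ} {C₁ C₂ α β : ℝ}
    (hα : 0 < α) (hβ : 0 < β)
    (hf : Continuous f)
    (hf₁ : ∀ t : ℝ, 0 ≤ t → |f t| ≤ C₁ * Real.exp (-α * t))
    (hf₂ : ∀ t : ℝ, t ≤ 0 → |f t| ≤ C₂ * Real.exp (β * t)) :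
    Integrable (fun t : ℝ => (f t : ℂ)) := by
  set γ := min α β with hγdef
  have hγ : 0 < γ := lt_min hα hβ
  refine Integrable.mono' (((integrable_exp_neg_mul_abs' hγ).const_mul (|C₁| + |C₂|)))
    (Complex.continuous_ofReal.comp hf).aestronglyMeasurable
    (Filter.Eventually.of_forall fun t => ?_)
  rw [Complex.norm_real, Real.norm_eq_abs]
  rcases le_total 0 t with ht | ht
  · refine (hf₁ t ht).trans ?_
    have h1 : C₁ ≤ |C₁| + |C₂| := le_trans (le_abs_self _) (le_add_of_nonneg_right (abs_nonneg _))
    have h2 : Real.exp (-α * t) ≤ Real.exp (-γ * |t|) := by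
      apply Real.exp_le_exp.2
      rw [abs_of_nonneg ht]
      nlinarith [min_le_left α β]
    exact mul_le_mul h1 h2 (Real.exp_pos _).le (by positivity)
  · refine (hf₂ t ht).trans ?_
    have h1 : C₂ ≤ |C₁| + |C₂| := le_trans (le_abs_self _) (le_add_of_nonneg_left (abs_nonneg _))
    have h2 : Real.exp (β * t) ≤ Real.exp (-γ * |t|) := by
      apply Real.exp_le_exp.2
      rw [abs_of_nonpos ht]
      nlinarith [min_le_right α β]
    exact mul_le_mul h1 h2 (Real.exp_pos _).le (by positivity)

theorem fourier_bicomplex_uniqueness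
    (f g : ℝ → ℝ) (C₁ C₂ α β : ℝ)
    (hC₁ : 0 < C₁) (hC₂ : 0 < C₂) (hα : 0 < α) (hβ : 0 < β)
    (hf : Continuous f) (hg : Continuous g)
    (hf₁ : ∀ t : ℝ, 0 ≤ t → |f t| ≤ C₁ * Real.exp (-α * t))
    (hf₂ : ∀ t : ℝ, t ≤ 0 → |f t| ≤ C₂ * Real.exp (β * t))
    (hg₁ : ∀ t : ℝ, 0 ≤ t → |g t| ≤ C₁ * Real.exp (-α * t))
    (hg₂ : ∀ t : ℝ, t ≤ 0 → |g t| ≤ C₂ * Real.exp (β * t))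
    (heq : ∀ ω : ℂ, -α < ω.im → ω.im < β →
      (∫ t : ℝ, Complex.exp (Complex.I * ω * t) * (f t : ℂ)) =
      (∫ t : ℝ, Complex.exp (Complex.I * ω * t) * (g t : ℂ))) :
    ∀ t : ℝ, f t = g t := by
  have hFint : Integrable (fun t : ℝ => (f t : ℂ)) := integrable_of_decay hα hβ hf hf₁ hf₂
  have hGint : Integrable (fun t : ℝ => (g t : ℂ)) := integrable_of_decay hα hβ hg hg₁ hg₂
  set h : ℝ → ℂ := fun t => (f t : ℂ) - (g t : ℂ) with hdef
  have hhint : Integrable h := hFint.sub hGint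
  have hhcont : Continuous h :=
    (Complex.continuous_ofReal.comp hf).sub (Complex.continuous_ofReal.comp hg)
  -- Fourier transform of h vanishes
  have key : 𝓕 h = 0 := by
    funext w
    rw [Real.fourier_eq']
    have hmem : -α < ((-(2 * π * w) : ℝ) : ℂ).im := by simp; linarith
    have hmem2 : ((-(2 * π * w) : ℝ) : ℂ).im < β := by simp [hβ]
    have hw := heq ((-(2 * π * w) : ℝ) : ℂ) hmem hmem2
    have hint1 : Integrable (fun t : ℝ =>
        Complex.exp (Complex.I * ((-(2 * π * w) : ℝ) : ℂ) * t) * (f t : ℂ)) := by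
      apply hFint.bdd_mul (c := 1) (Complex.continuous_exp.comp (by continuity)).aestronglyMeasurable
      refine Filter.Eventually.of_forall fun t => ?_
      simp [Complex.norm_exp]
    have hint2 : Integrable (fun t : ℝ =>
        Complex.exp (Complex.I * ((-(2 * π * w) : ℝ) : ℂ) * t) * (g t : ℂ)) := by
      apply hGint.bdd_mul (c := 1) (Complex.continuous_exp.comp (by continuity)).aestronglyMeasurable
      refine Filter.Eventually.of_forall fun t => ?_
      simp [Complex.norm_exp]
    have : (∫ t : ℝ, Complex.exp (Complex.I * ((-(2 * π * w) : ℝ) : ℂ) * t) * h t) = 0 := by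
      simp only [hdef, mul_sub]
      rw [integral_sub hint1 hint2, hw, sub_self]
    rw [Pi.zero_apply, ← this]
    congr 1
    funext v
    rw [smul_eq_mul]
    congr 2
    push_cast
    simp only [RCLike.inner_apply, conj_trivial]
    push_cast
    ring
  have hFh : Integrable (𝓕 h) := by rw [key]; exact integrable_zero _ _ _
  have hinv := hhcont.fourierInv_fourier_eq hhint hFh
  rw [key] at hinv
  have hzero : (𝓕⁻ (0 : ℝ → ℂ)) = 0 := by
    funext w
    simp [Real.fourierInv_eq]
  rw [hzero] at hinv
  intro t
  have := congrFun hinv.symm t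
  simp only [hdef, Pi.zero_apply, sub_eq_zero] at this
  exact_mod_cast this
end

section
/- Let f, g : ℝ → ℝ be continuous functions each satisfying the exponential decay estimates with constants C₁, C₂, α, β > 0. Define the convolution (f * g)(t) = ∫_{−∞}^{∞} f(u)·g(t − u) du. Then for every ω ∈ ℂ with −α < Im ω < β, F(f * g)(ω) = F(f)(ω)·F(g)(ω). -/
open MeasureTheory Real

private lemma aux_integrable_two_sided (h : ℝ → ℂ) (hh : Continuous h)
    {a b C D : ℝ} (ha : 0 < a) (hb : 0 < b)
    (h1 : ∀ t : ℝ, 0 ≤ t → ‖h t‖ ≤ C * Real.exp (-a * t))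
    (h2 : ∀ t : ℝ, t ≤ 0 → ‖h t‖ ≤ D * Real.exp (b * t)) :
    Integrable h := by
  rw [← integrableOn_univ, ← Set.Iic_union_Ioi (a := (0 : ℝ))]
  apply IntegrableOn.union
  · have hexp : IntegrableOn (fun t : ℝ => D * Real.exp (b * t)) (Set.Iic 0) := by
      rw [← Measure.map_neg_eq_self (volume : Measure ℝ)]
      have m : MeasurableEmbedding fun x : ℝ => -x :=
        (Homeomorph.neg ℝ).measurableEmbedding
      rw [m.integrableOn_map_iff]
      have : ((fun t : ℝ => D * Real.exp (b * t)) ∘ fun x : ℝ => -x) =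
          fun x : ℝ => D * Real.exp (-b * x) := by
        funext x; simp only [Function.comp_apply]; congr 1; ring_nf
      rw [this, Set.neg_preimage, Set.neg_Iic, neg_zero]
      exact Iff.mpr integrableOn_Ici_iff_integrableOn_Ioi
        ((exp_neg_integrableOn_Ioi 0 hb).const_mul D)
    exact Integrable.mono' hexp hh.aestronglyMeasurable.restrict
      (ae_restrict_of_forall_mem measurableSet_Iic fun t ht => h2 t ht)
  · have hexp : IntegrableOn (fun t : ℝ => C * Real.exp (-a * t)) (Set.Ioi 0) :=
      (exp_neg_integrableOn_Ioi 0 ha).const_mul C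
    exact Integrable.mono' hexp hh.aestronglyMeasurable.restrict
      (ae_restrict_of_forall_mem measurableSet_Ioi fun t ht => h1 t ht.le)

theorem fourier_bicomplex_convolution
    (f g : ℝ → ℝ) (C₁ C₂ α β : ℝ)
    (hC₁ : 0 < C₁) (hC₂ : 0 < C₂) (hα : 0 < α) (hβ : 0 < β)
    (hf : Continuous f) (hg : Continuous g)
    (hf₁ : ∀ t : ℝ, 0 ≤ t → |f t| ≤ C₁ * Real.exp (-α * t))
    (hf₂ : ∀ t : ℝ, t ≤ 0 → |f t| ≤ C₂ * Real.exp (β * t))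
    (hg₁ : ∀ t : ℝ, 0 ≤ t → |g t| ≤ C₁ * Real.exp (-α * t))
    (hg₂ : ∀ t : ℝ, t ≤ 0 → |g t| ≤ C₂ * Real.exp (β * t))
    (ω : ℂ) (hω₁ : -α < ω.im) (hω₂ : ω.im < β) :
    (∫ t : ℝ, Complex.exp (Complex.I * ω * t) *
        ((∫ u : ℝ, f u * g (t - u) : ℝ) : ℂ)) =
      (∫ t : ℝ, Complex.exp (Complex.I * ω * t) * (f t : ℂ)) *
      (∫ t : ℝ, Complex.exp (Complex.I * ω * t) * (g t : ℂ)) := by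
  have hnorm : ∀ t : ℝ, ‖Complex.exp (Complex.I * ω * t)‖ = Real.exp (-ω.im * t) := by
    intro t
    rw [Complex.norm_exp]
    congr 1
    simp [Complex.mul_re, Complex.mul_im]
  set F : ℝ → ℂ := fun t => Complex.exp (Complex.I * ω * t) * (f t : ℂ) with hF_def
  set G : ℝ → ℂ := fun t => Complex.exp (Complex.I * ω * t) * (g t : ℂ) with hG_def
  have ha' : 0 < α + ω.im := by linarith
  have hb' : 0 < β - ω.im := by linarith
  have key : ∀ (φ : ℝ → ℝ), Continuous φ →
      (∀ t : ℝ, 0 ≤ t → |φ t| ≤ C₁ * Real.exp (-α * t)) →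
      (∀ t : ℝ, t ≤ 0 → |φ t| ≤ C₂ * Real.exp (β * t)) →
      Integrable (fun t : ℝ => Complex.exp (Complex.I * ω * t) * (φ t : ℂ)) := by
    intro φ hφ hφ₁ hφ₂
    have hcont : Continuous (fun t : ℝ => Complex.exp (Complex.I * ω * t) * (φ t : ℂ)) := by
      fun_prop
    apply aux_integrable_two_sided _ hcont ha' hb'
    · intro t ht
      rw [norm_mul, hnorm, Complex.norm_real, Real.norm_eq_abs]
      calc Real.exp (-ω.im * t) * |φ t|
          ≤ Real.exp (-ω.im * t) * (C₁ * Real.exp (-α * t)) := by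
            gcongr; exact hφ₁ t ht
        _ = C₁ * Real.exp (-(α + ω.im) * t) := by
            rw [mul_left_comm, ← Real.exp_add]; congr 1; ring
    · intro t ht
      rw [norm_mul, hnorm, Complex.norm_real, Real.norm_eq_abs]
      calc Real.exp (-ω.im * t) * |φ t|
          ≤ Real.exp (-ω.im * t) * (C₂ * Real.exp (β * t)) := by
            gcongr; exact hφ₂ t ht
        _ = C₂ * Real.exp ((β - ω.im) * t) := by
            rw [mul_left_comm, ← Real.exp_add]; congr 1; ring
  have hF : Integrable F := key f hf hf₁ hf₂
  have hG : Integrable G := key g hg hg₁ hg₂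
  have hconv := integral_convolution (ContinuousLinearMap.mul ℝ ℂ) hF hG
  have hpt : ∀ t : ℝ, Complex.exp (Complex.I * ω * t) *
      ((∫ u : ℝ, f u * g (t - u) : ℝ) : ℂ) =
      convolution F G (ContinuousLinearMap.mul ℝ ℂ) volume t := by
    intro t
    rw [convolution_def]
    have h1 : ((∫ u : ℝ, f u * g (t - u) : ℝ) : ℂ) = ∫ u : ℝ, ((f u * g (t - u) : ℝ) : ℂ) :=
      integral_ofReal.symm
    rw [h1, ← MeasureTheory.integral_const_mul]
    congr 1
    funext u
    have hexp : Complex.exp (Complex.I * ω * t) =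
        Complex.exp (Complex.I * ω * u) * Complex.exp (Complex.I * ω * (↑(t - u) : ℝ)) := by
      rw [← Complex.exp_add]; congr 1; push_cast; ring
    simp only [ContinuousLinearMap.mul_apply', hF_def, hG_def]
    rw [hexp, Complex.ofReal_mul]
    ring
  calc (∫ t : ℝ, Complex.exp (Complex.I * ω * t) * ((∫ u : ℝ, f u * g (t - u) : ℝ) : ℂ))
      = ∫ t : ℝ, convolution F G (ContinuousLinearMap.mul ℝ ℂ) volume t :=
        integral_congr_ae (Filter.Eventually.of_forall hpt)
    _ = (∫ t : ℝ, F t) * (∫ t : ℝ, G t) := by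
        rw [hconv]; simp [ContinuousLinearMap.mul_apply']
end
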